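/- Let κ ∈ ℂ, κ ≠ 0. The map S₁ : (ℂ²)⁴ → (ℂ²)⁴ given by S₁(x₁,x₂,y₁,y₂,z₁,z₂,t₁,t₂) = (x₁y₁/(y₁ + x₁z₁), x₂, x₁z₁/κ, y₂, (y₁ + x₁z₁)/x₁, t₂, t₁y₂/x₂, z₂) is a 4-simplex map (the 4-simplex identity holding at every point of (ℂ²)^{10} at which all denominators occurring in both composed sides are nonzero); it is noninvolutive (the first component of S₁∘S₁ equals x₁²y₁z₁/((y₁ + x₁z₁)(κy₁ + x₁z₁)), so there is a point where S₁(S₁(p)) ≠ p); and I₁ = x₂, I₂ = y₂, I₃ = t₂z₂ and I₄ = t₂ + z₂ are invariants of S₁, i.e. writing S₁(x₁,x₂,y₁,y₂,z₁,z₂,t₁,t₂) = (u₁,u₂,v₁,v₂,w₁,w₂,r₁,r₂) one has u₂ = x₂, v₂ = y₂, w₂r₂ = t₂z₂ and w₂ + r₂ = t₂ + z₂ wherever defined. -/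

import Mathlib

noncomputable section

namespace Paper4Simplex

variable {X : Type*}

/-- Quadruples over `X`. -/
abbrev Q (X : Type*) : Type _ := X × X × X × X

/-- 10-tuples over `X`. -/
abbrev P (X : Type*) : Type _ := X × X × X × X × X × X × X × X × X × X

/-- `S` acting on coordinates 1,2,3,4 of a 10-tuple. -/
def app1234 (S : Q X → Q X) : P X → P X := fun p =>
  match p with
  | (a,b,c,d,e,f,g,h,i,j) =>
    match S (a,b,c,d) with
    | (A,B,C,D) => (A,B,C,D,e,f,g,h,i,j)

/-- `S` acting on coordinates 1,5,6,7 of a 10-tuple. -/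
def app1567 (S : Q X → Q X) : P X → P X := fun p =>
  match p with
  | (a,b,c,d,e,f,g,h,i,j) =>
    match S (a,e,f,g) with
    | (A,E,F,G) => (A,b,c,d,E,F,G,h,i,j)

/-- `S` acting on coordinates 2,5,8,9 of a 10-tuple. -/
def app2589 (S : Q X → Q X) : P X → P X := fun p =>
  match p with
  | (a,b,c,d,e,f,g,h,i,j) =>
    match S (b,e,h,i) with
    | (B,E,H,I) => (a,B,c,d,E,f,g,H,I,j)

/-- `S` acting on coordinates 3,6,8,10 of a 10-tuple. -/
def app368X (S : Q X → Q X) : P X → P X := fun p =>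
  match p with
  | (a,b,c,d,e,f,g,h,i,j) =>
    match S (c,f,h,j) with
    | (C,F,H,J) => (a,b,C,d,e,F,g,H,i,J)

/-- `S` acting on coordinates 4,7,9,10 of a 10-tuple. -/
def app479X (S : Q X → Q X) : P X → P X := fun p =>
  match p with
  | (a,b,c,d,e,f,g,h,i,j) =>
    match S (d,g,i,j) with
    | (D,G,I,J) => (a,b,c,D,e,f,G,h,I,J)

def proj1234 : P X → Q X := fun p => match p with
  | (a,b,c,d,_,_,_,_,_,_) => (a,b,c,d)

def proj1567 : P X → Q X := fun p => match p with
  | (a,_,_,_,e,f,g,_,_,_) => (a,e,f,g)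

def proj2589 : P X → Q X := fun p => match p with
  | (_,b,_,_,e,_,_,h,i,_) => (b,e,h,i)

def proj368X : P X → Q X := fun p => match p with
  | (_,_,c,_,_,f,_,h,_,j) => (c,f,h,j)

def proj479X : P X → Q X := fun p => match p with
  | (_,_,_,d,_,_,g,_,i,j) => (d,g,i,j)

/-- Left-hand side of the 4-simplex equation. -/
def lhs (S : Q X → Q X) : P X → P X :=
  app1234 S ∘ app1567 S ∘ app2589 S ∘ app368X S ∘ app479X S

/-- Right-hand side of the 4-simplex equation. -/
def rhs (S : Q X → Q X) : P X → P X :=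
  app479X S ∘ app368X S ∘ app2589 S ∘ app1567 S ∘ app1234 S

/-- All denominators occurring on the left-hand side composition are nonzero:
`D` holds at each quadruple to which `S` is applied. -/
def lhsDom (D : Q X → Prop) (S : Q X → Q X) (p : P X) : Prop :=
  D (proj479X p) ∧
  D (proj368X (app479X S p)) ∧
  D (proj2589 (app368X S (app479X S p))) ∧
  D (proj1567 (app2589 S (app368X S (app479X S p)))) ∧
  D (proj1234 (app1567 S (app2589 S (app368X S (app479X S p)))))

/-- All denominators occurring on the right-hand side composition are nonzero. -/
def rhsDom (D : Q X → Prop) (S : Q X → Q X) (p : P X) : Prop :=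
  D (proj1234 p) ∧
  D (proj1567 (app1234 S p)) ∧
  D (proj2589 (app1567 S (app1234 S p))) ∧
  D (proj368X (app2589 S (app1567 S (app1234 S p)))) ∧
  D (proj479X (app368X S (app2589 S (app1567 S (app1234 S p)))))


/-! Case b of the Kashaev–Korepanov–Sergeev type 4-simplex maps. -/

abbrev C2 : Type := ℂ × ℂ

/-- The map S₁ of case b. -/
def Sb1 (κ : ℂ) : Q C2 → Q C2 := fun q =>
  match q with
  | ((x1,x2),(y1,y2),(z1,z2),(t1,t2)) =>
    ((x1*y1/(y1 + x1*z1), x2), (x1*z1/κ, y2), ((y1 + x1*z1)/x1, t2), (t1*y2/x2, z2))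

/-- The map S₂ of case b. -/
def Sb2 (κ : ℂ) : Q C2 → Q C2 := fun q =>
  match q with
  | ((x1,x2),(y1,y2),(z1,z2),(t1,t2)) =>
    ((x1*y1/(y1 + x1*z1), x2), (x1*z1/κ, y2), ((y1 + x1*z1)/x1, y2), (t1*y2/x2, t2*z2/y2))

/-- Nonvanishing of the denominators of `Sb1` (besides the parameter κ). -/
def DomB1 : Q C2 → Prop := fun q =>
  match q with
  | ((x1,x2),(y1,_),(z1,_),_) => y1 + x1*z1 ≠ 0 ∧ x1 ≠ 0 ∧ x2 ≠ 0

/-- Nonvanishing of the denominators of `Sb2` (besides the parameter κ). -/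
def DomB2 : Q C2 → Prop := fun q =>
  match q with
  | ((x1,x2),(y1,y2),(z1,_),_) => y1 + x1*z1 ≠ 0 ∧ x1 ≠ 0 ∧ x2 ≠ 0 ∧ y2 ≠ 0

set_option maxHeartbeats 4000000 in
/-- The map S₁ : (ℂ²)⁴ → (ℂ²)⁴,
S₁(x₁,x₂,y₁,y₂,z₁,z₂,t₁,t₂) = (x₁y₁/(y₁+x₁z₁), x₂, x₁z₁/κ, y₂, (y₁+x₁z₁)/x₁, t₂, t₁y₂/x₂, z₂),
is a 4-simplex map (wherever all denominators on both composed sides are nonzero),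
it is noninvolutive, and I₁ = x₂, I₂ = y₂, I₃ = t₂z₂, I₄ = t₂+z₂ are invariants:
writing S₁(…) = (u₁,u₂,v₁,v₂,w₁,w₂,r₁,r₂), one has u₂ = x₂, v₂ = y₂, w₂r₂ = t₂z₂ and
w₂ + r₂ = t₂ + z₂ wherever defined. -/
theorem Sb1_4simplex_noninvolutive_invariants (κ : ℂ) (hκ : κ ≠ 0) :
    (∀ p : P C2, lhsDom DomB1 (Sb1 κ) p → rhsDom DomB1 (Sb1 κ) p →
      lhs (Sb1 κ) p = rhs (Sb1 κ) p) ∧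
    (∃ p : Q C2, DomB1 p ∧ DomB1 (Sb1 κ p) ∧ Sb1 κ (Sb1 κ p) ≠ p) ∧
    (∀ x1 x2 y1 y2 z1 z2 t1 t2 : ℂ,
      DomB1 ((x1,x2),(y1,y2),(z1,z2),(t1,t2)) →
      match Sb1 κ ((x1,x2),(y1,y2),(z1,z2),(t1,t2)) with
      | ((_,u2),(_,v2),(_,w2),(_,r2)) =>
        u2 = x2 ∧ v2 = y2 ∧ w2*r2 = t2*z2 ∧ w2 + r2 = t2 + z2) := by
  refine ⟨?_, ?_, ?_⟩
  · rintro ⟨⟨a1,a2⟩,⟨b1,b2⟩,⟨c1,c2⟩,⟨d1,d2⟩,⟨e1,e2⟩,⟨f1,f2⟩,⟨g1,g2⟩,⟨h1,h2⟩,⟨i1,i2⟩,⟨j1,j2⟩⟩ hL hR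
    simp only [lhsDom, rhsDom, proj1234, proj1567, proj2589, proj368X, proj479X,
      app1234, app1567, app2589, app368X, app479X, Sb1, DomB1] at hL hR
    obtain ⟨⟨L1,L2,L3⟩,⟨L4,L5,L6⟩,⟨L7,L8,L9⟩,⟨L10,L11,L12⟩,⟨L13,L14,L15⟩⟩ := hL
    obtain ⟨⟨R1,R2,R3⟩,⟨R4,R5,R6⟩,⟨R7,R8,R9⟩,⟨R10,R11,R12⟩,⟨R13,R14,R15⟩⟩ := hR
    simp only [lhs, rhs, Function.comp_apply, app1234, app1567, app2589, app368X, app479X,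
      Sb1, Prod.mk.injEq]
    field_simp at L7 L10 L13 L14
    field_simp [R1, R2, hκ] at R4
    field_simp [R1, R2, hκ] at R7
    field_simp [L4, L5, L7, L10, hκ, L8, L11] at L13
    have hE : ¬(e1*c1 + b1*f1 + b1*c1*h1) = 0 := fun h => L7 (by rw [div_eq_zero_iff]; left; linear_combination h)
    have hK : ¬(b1*f1 + b1*c1*h1 + a1*c1^2*h1) = 0 := fun h => L10 (by rw [div_eq_zero_iff]; left; linear_combination h)
    have hSL : ¬(e1*(b1*f1 + b1*c1*h1 + a1*c1^2*h1) + a1*f1*(e1*c1 + b1*f1 + b1*c1*h1)) = 0 :=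
      fun h => L13 (by rw [div_add_div _ _ (fun h' => hE (by linear_combination h')) (fun h' => hK (by linear_combination h')), ← mul_div_assoc, div_eq_zero_iff]; left; linear_combination b1*c1*h)
    have hCN : ¬(c1*(e1*(b1+a1*c1) + a1*b1*f1) + b1*(b1*f1 + b1*c1*h1 + a1*c1^2*h1)) = 0 :=
      fun h => (mul_ne_zero hE R1) (by linear_combination h)
    have he2 : ¬e2 = 0 := fun h => R13 (by rw [h]; ring)
    have e1A : (e1 + a1*b1/(b1+a1*c1)*f1)/(a1*b1/(b1+a1*c1)) = (e1*(b1+a1*c1)+a1*b1*f1)/(a1*b1) := by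
      field_simp
    have hN4b : e1 + a1*b1/(b1+a1*c1)*f1 = (e1*(b1+a1*c1)+a1*b1*f1)/(b1+a1*c1) := by
      field_simp
    have hsum0 : a1*b1/(b1+a1*c1)*f1/κ + a1*c1/κ*h1
        = a1*(b1*f1 + b1*c1*h1 + a1*c1^2*h1)/((b1+a1*c1)*κ) := by
      field_simp
      ring
    have hquot : a1*(b1*f1 + b1*c1*h1 + a1*c1^2*h1)/((b1+a1*c1)*κ)/(a1*c1/κ)
        = (b1*f1 + b1*c1*h1 + a1*c1^2*h1)/(c1*(b1+a1*c1)) := by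
      field_simp
    have hDL : b1*((f1+c1*h1)/c1)/κ + a1*(c1*h1/κ)
        = (b1*f1 + b1*c1*h1 + a1*c1^2*h1)/(c1*κ) := by
      field_simp
    have hAhat2 : a1*(b1*((f1+c1*h1)/c1)/κ)/((b1*f1 + b1*c1*h1 + a1*c1^2*h1)/(c1*κ))
        = a1*b1*(f1+c1*h1)/(b1*f1 + b1*c1*h1 + a1*c1^2*h1) := by
      field_simp
    have hEL : e1 + b1*((f1+c1*h1)/c1) = (e1*c1 + b1*f1 + b1*c1*h1)/c1 := by
      field_simp
      ring
    have hBE : b1*e1/((e1*c1 + b1*f1 + b1*c1*h1)/c1) = b1*e1*c1/(e1*c1 + b1*f1 + b1*c1*h1) := by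
      rw [div_div_eq_mul_div, mul_comm, mul_div_assoc, mul_comm, mul_div_assoc]
    have hsumL : b1*e1*c1/(e1*c1 + b1*f1 + b1*c1*h1)
          + a1*b1*(f1+c1*h1)/(b1*f1 + b1*c1*h1 + a1*c1^2*h1)*(c1*f1/(f1+c1*h1))
        = b1*c1*(e1*(b1*f1 + b1*c1*h1 + a1*c1^2*h1) + a1*f1*(e1*c1 + b1*f1 + b1*c1*h1))
            /((e1*c1 + b1*f1 + b1*c1*h1)*(b1*f1 + b1*c1*h1 + a1*c1^2*h1)) := by
      rw [div_mul_div_comm, div_add_div _ _ hE (mul_ne_zero hK L4),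
        div_eq_div_iff (mul_ne_zero hE (mul_ne_zero hK L4)) (mul_ne_zero hE hK)]
      ring
    have hsumR : (e1*(b1+a1*c1)+a1*b1*f1)/(a1*b1)
          + (b1+a1*c1)/a1*((b1*f1 + b1*c1*h1 + a1*c1^2*h1)/(c1*(b1+a1*c1)))
        = (c1*(e1*(b1+a1*c1) + a1*b1*f1) + b1*(b1*f1 + b1*c1*h1 + a1*c1^2*h1))/(a1*b1*c1) := by
      field_simp
    have hR13s : g1*e2/a2 + d1*b2/a2*(i1*e2/b2) = e2*(g1 + d1*i1)/a2 := by
      field_simp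
    rw [e1A]
    simp only [hN4b, hsum0, hDL, hEL, hR13s]
    simp only [hquot, hAhat2, hBE]
    simp only [hsumL, hsumR]
    have N1 : b1 + c1*a1 ≠ 0 := fun h => R1 (by linear_combination h)
    have N2 : c1*a1 + b1 ≠ 0 := fun h => R1 (by linear_combination h)
    have N3 : e1*c1 + b1*(f1+c1*h1) ≠ 0 := fun h => hE (by linear_combination h)
    have N4 : c1*e1 + b1*(f1+c1*h1) ≠ 0 := fun h => hE (by linear_combination h)
    have N5 : b1*(f1+c1*h1) + c1^2*h1*a1 ≠ 0 := fun h => hK (by linear_combination h)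
    have N6 : b1*(f1+c1*h1) + a1*c1^2*h1 ≠ 0 := fun h => hK (by linear_combination h)
    have N7 : c1*e1 + b1*f1 + b1*c1*h1 ≠ 0 := fun h => hE (by linear_combination h)
    have N8 : (b1*(f1+c1*h1) + a1*c1^2*h1)*e1 + a1*f1*(c1*e1 + b1*f1 + b1*c1*h1) ≠ 0 :=
      fun h => hSL (by linear_combination h)
    have N9 : e1*(b1+a1*c1) + a1*b1*f1 ≠ 0 := fun h => R4 (by rw [h, zero_div])
    have N10 : c1*(e1*(b1+c1*a1) + b1*f1*a1) + b1*(b1*(f1+c1*h1) + c1^2*h1*a1) ≠ 0 :=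
      fun h => hCN (by linear_combination h)
    refine ⟨⟨?_,trivial⟩,⟨?_,trivial⟩,⟨?_,trivial⟩,⟨?_,trivial⟩,⟨?_,trivial⟩,⟨?_,trivial⟩,⟨?_,trivial⟩,⟨?_,trivial⟩,⟨?_,trivial⟩,trivial⟩ <;>
      field_simp <;>
      ring
  · exact ⟨((1,1),(1,1),(0,1),(1,1)), by norm_num [DomB1], by norm_num [Sb1, DomB1],
      by simp [Sb1]⟩
  · intro x1 x2 y1 y2 z1 z2 t1 t2 hD
    obtain ⟨h1, h2, h3⟩ := hD
    refine ⟨rfl, rfl, ?_, ?_⟩ <;> simp [Sb1]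


end Paper4Simplex
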